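/- Let X be a topological space, h : X → X a continuous map, r a positive integer such that the r-th iterate of h is the identity map of X, and H a homotopy from the identity map of X to h. Fix p ∈ X and let α be the path from p to h(p) given by α(t) = H(t, p). Then the concatenated loop γ_p = α · (h ∘ α) · (h² ∘ α) · ⋯ · (h^{r−1} ∘ α) (which is a loop based at p because h^r(p) = p) represents an element of the center of the fundamental group π₁(X, p). -/

import Mathlib

/-- Given a continuous map `h : X → X` and a path `α` from `p` to `h p`,
`iterLoop h α k` is the concatenated path `α · (h ∘ α) · ⋯ · (h^{k−1} ∘ α)`
from `p` to `h^[k] p`. -/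
noncomputable def iterLoop {X : Type*} [TopologicalSpace X] (h : C(X, X)) {p : X}
    (α : Path p (h p)) : (k : ℕ) → Path p ((⇑h)^[k] p)
  | 0 => Path.refl p
  | (k + 1) => (iterLoop h α k).trans (α.map (h.continuous.iterate k))

noncomputable section

open CategoryTheory FundamentalGroupoid FundamentalGroupoidFunctor
open scoped FundamentalGroupoid

attribute [local instance] Path.Homotopic.setoid

/-- `h` iterated `k` times as a continuous map. -/
def hpow {X : Type*} [TopologicalSpace X] (h : C(X, X)) (k : ℕ) : C(X, X) :=
  ⟨(⇑h)^[k], h.continuous.iterate k⟩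

/-- The homotopy from `h^[k]` to `h^[k+1]` obtained by postcomposing `H` with `h^[k]`. -/
def iterHomotopy {X : Type*} [TopologicalSpace X] {h : C(X, X)}
    (H : ContinuousMap.Homotopy (ContinuousMap.id X) h) (k : ℕ) :
    ContinuousMap.Homotopy (hpow h k) (hpow h (k + 1)) where
  toContinuousMap := (hpow h k).comp H.toContinuousMap
  map_zero_left x := by
    show (⇑h)^[k] (H (0, x)) = (⇑h)^[k] x
    rw [H.apply_zero]
    rfl
  map_one_left x := by
    show (⇑h)^[k] (H (1, x)) = (⇑h)^[k + 1] x
    rw [H.apply_one]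
    exact (Function.iterate_succ_apply _ _ _).symm

lemma castEq {X : TopCat} {x y y' : X} (γ : Path x y) (hy : y = y') (hy' : y' = y) :
    (⟦γ.cast rfl hy'⟧ : fromTop x ⟶ fromTop y') =
      (⟦γ⟧ : fromTop x ⟶ fromTop y) ≫ ContinuousMap.Homotopy.hcast hy := by
  subst hy
  have : γ.cast rfl hy' = γ := by ext t; rfl
  rw [this]
  simp
  exact (Category.comp_id (X := fromTop x) _).symm

lemma key (X : TopCat) (h : C(X, X))
    (H : ContinuousMap.Homotopy (ContinuousMap.id X) h) (p : X)
    (α : Path p (h p)) (hα : ∀ t : unitInterval, α t = H (t, p)) (k : ℕ)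
    (q : fromTop p ⟶ fromTop p) :
    q ≫ (⟦iterLoop h α k⟧ : fromTop p ⟶ fromTop ((⇑h)^[k] p)) =
      (⟦iterLoop h α k⟧ : fromTop p ⟶ fromTop ((⇑h)^[k] p)) ≫ (πₘ (TopCat.ofHom (hpow h k))).map q := by
  induction k with
  | zero =>
      have h1 : (⟦iterLoop h α 0⟧ : fromTop p ⟶ fromTop ((⇑h)^[0] p)) = 𝟙 (fromTop p) := rfl
      have h2 : (πₘ (TopCat.ofHom (hpow h 0))).map q = q := by
        refine Quotient.inductionOn q fun β => ?_
        rfl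
      rw [h1, h2]; exact (Category.comp_id q).trans (Category.id_comp q).symm
  | succ k ih =>
      have hpath : α.map (h.continuous.iterate k) = (iterHomotopy H k).evalAt p := by
        ext t
        exact congrArg _ (hα t)
      have hsplit : (⟦iterLoop h α (k + 1)⟧ : fromTop p ⟶ fromTop ((⇑h)^[k + 1] p)) =
          CategoryStruct.comp (X := fromTop p) (Y := fromTop ((⇑h)^[k] p))
            (Z := fromTop ((⇑h)^[k + 1] p))
            ⟦iterLoop h α k⟧ ⟦(iterHomotopy H k).evalAt p⟧ := by
        rw [← hpath]
        rfl
      have nat := (((iterHomotopy H k).eq_diag_path q).1).trans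
        ((((iterHomotopy H k).eq_diag_path q).2).symm)
      erw [hsplit, ← Category.assoc, ih, Category.assoc, Category.assoc]
      exact congrArg (CategoryStruct.comp (⟦iterLoop h α k⟧ :
        fromTop p ⟶ fromTop ((⇑h)^[k] p))) nat

theorem iterLoop_mem_center_fundamentalGroup (X : TopCat)
    (h : C(X, X)) (r : ℕ) (hr : 0 < r) (hiter : (⇑h)^[r] = id)
    (H : ContinuousMap.Homotopy (ContinuousMap.id X) h) (p : X)
    (α : Path p (h p)) (hα : ∀ t : unitInterval, α t = H (t, p)) :
    FundamentalGroup.fromPath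
        (⟦(iterLoop h α r).cast rfl (by rw [hiter]; rfl)⟧ :
          Path.Homotopic.Quotient p p)
      ∈ Subgroup.center (FundamentalGroup X p) := by
  have hp : (⇑h)^[r] p = p := by rw [hiter]; rfl
  rw [Subgroup.mem_center_iff]
  intro g
  show (⟦(iterLoop h α r).cast rfl _⟧ : fromTop p ⟶ fromTop p) ≫ g =
    g ≫ (⟦(iterLoop h α r).cast rfl _⟧ : fromTop p ⟶ fromTop p)
  have hmap : (πₘ (TopCat.ofHom (hpow h r))).map g =
      ContinuousMap.Homotopy.hcast hp ≫ g ≫ ContinuousMap.Homotopy.hcast hp.symm := by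
    refine Quotient.inductionOn g fun β => ?_
    have := ContinuousMap.Homotopy.eq_path_of_eq_image
      (f := hpow h r) (g := ContinuousMap.id X) (p := β) (q := β)
      (fun t => by simp [hpow, hiter])
    exact this
  rw [castEq _ hp]
  conv_rhs => erw [← Category.assoc, key X h H p α hα r g, hmap]
  simp only [ContinuousMap.Homotopy.hcast_def, Category.assoc, eqToHom_trans, eqToHom_refl,
    Category.comp_id]
  erw [Category.assoc, Category.assoc, Category.assoc, Category.assoc, eqToHom_trans, eqToHom_refl, Category.comp_id]
  rfl

end
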